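/- Let K ≥ 1 be a natural number. For E > 0 set a(E) = (1+K·E)^{−1} and b(E) = (1+E)^{−1}, and define D_PH(E) = a(E)·ln(a(E)/b(E)) + (1−a(E))·ln((1−a(E))/(1−b(E))) + (K−1)·ln(1+E). Then as E → 0⁺, D_PH(E) = K·(ln K)·E + O(E²); that is, the function E ↦ D_PH(E) − K·(ln K)·E is O(E²) with respect to the filter of punctured right-neighborhoods of 0. -/

import Mathlib

open Filter Topology Asymptotics

lemma log_one_add_bound {x : ℝ} (hx : 0 ≤ x) :
    0 ≤ x - Real.log (1 + x) ∧ x - Real.log (1 + x) ≤ x ^ 2 := by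
  have hpos : (0:ℝ) < 1 + x := by linarith
  have h1 : Real.log (1 + x) ≤ x := by
    have := Real.log_le_sub_one_of_pos hpos
    linarith
  have h2 : x / (1 + x) ≤ Real.log (1 + x) := by
    have h := Real.log_le_sub_one_of_pos (show (0:ℝ) < (1 + x)⁻¹ by positivity)
    rw [Real.log_inv] at h
    have heq : (1 + x)⁻¹ - 1 = -(x / (1 + x)) := by field_simp; ring
    rw [heq] at h
    linarith
  refine ⟨by linarith, ?_⟩
  have heq : x - x / (1 + x) = x ^ 2 / (1 + x) := by field_simp; ring
  have h3 : x ^ 2 / (1 + x) ≤ x ^ 2 := by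
    apply div_le_self (by positivity) (by linarith)
  linarith

/-- Low-energy expansion of the photon-counting (Hadamard interferometer) error
exponent: with `a(E) = (1+KE)⁻¹`, `b(E) = (1+E)⁻¹` and
`D_PH(E) = a·ln(a/b) + (1−a)·ln((1−a)/(1−b)) + (K−1)·ln(1+E)`, we have
`D_PH(E) = K·(ln K)·E + O(E²)` as `E → 0⁺`. -/
theorem photon_counting_exponent_expansion (K : ℕ) (hK : 1 ≤ K) :
    (fun E : ℝ =>
        ((1 + (K : ℝ) * E)⁻¹ * Real.log ((1 + (K : ℝ) * E)⁻¹ / (1 + E)⁻¹) +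
            (1 - (1 + (K : ℝ) * E)⁻¹) *
              Real.log ((1 - (1 + (K : ℝ) * E)⁻¹) / (1 - (1 + E)⁻¹)) +
            ((K : ℝ) - 1) * Real.log (1 + E)) -
          (K : ℝ) * Real.log (K : ℝ) * E) =O[𝓝[>] (0 : ℝ)]
      fun E : ℝ => E ^ 2 := by
  have hKR : (1:ℝ) ≤ (K:ℝ) := by exact_mod_cast hK
  have hK0 : (0:ℝ) < (K:ℝ) := by linarith
  have hlK : 0 ≤ Real.log (K:ℝ) := Real.log_nonneg hKR
  rw [Asymptotics.isBigO_iff]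
  refine ⟨(K:ℝ) + (K:ℝ)^2 + (K:ℝ)^2 * Real.log (K:ℝ), ?_⟩
  filter_upwards [self_mem_nhdsWithin] with E hE
  simp only [Set.mem_Ioi] at hE
  have hu : (0:ℝ) < 1 + E := by linarith
  have hv : (0:ℝ) < 1 + (K:ℝ) * E := by nlinarith
  set lu := Real.log (1 + E) with hlu
  set lv := Real.log (1 + (K:ℝ) * E) with hlv
  set lk := Real.log (K:ℝ) with hlk
  have h1 : (1:ℝ) - (1 + (K:ℝ) * E)⁻¹ = (K:ℝ) * E / (1 + (K:ℝ) * E) := by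
    field_simp
    ring
  have h2 : (1:ℝ) - (1 + E)⁻¹ = E / (1 + E) := by field_simp; ring
  have h3 : Real.log ((1 + (K:ℝ) * E)⁻¹ / (1 + E)⁻¹) = lu - lv := by
    rw [inv_div_inv, Real.log_div hu.ne' hv.ne']
  have h4 : Real.log (((K:ℝ) * E / (1 + (K:ℝ) * E)) / (E / (1 + E)))
      = lk + lu - lv := by
    have heq : ((K:ℝ) * E / (1 + (K:ℝ) * E)) / (E / (1 + E))
        = (K:ℝ) * (1 + E) / (1 + (K:ℝ) * E) := by
      field_simp
    rw [heq, Real.log_div (by positivity) hv.ne',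
      Real.log_mul hK0.ne' hu.ne']
  have hid : ((1 + (K : ℝ) * E)⁻¹ * Real.log ((1 + (K : ℝ) * E)⁻¹ / (1 + E)⁻¹) +
        (1 - (1 + (K : ℝ) * E)⁻¹) *
          Real.log ((1 - (1 + (K : ℝ) * E)⁻¹) / (1 - (1 + E)⁻¹)) +
        ((K : ℝ) - 1) * Real.log (1 + E)) -
        (K : ℝ) * Real.log (K : ℝ) * E
      = (K:ℝ) * (lu - E) - (lv - (K:ℝ) * E)
        - (K:ℝ)^2 * lk * E^2 / (1 + (K:ℝ) * E) := by
    rw [h1, h2, h3, h4, ← hlu, ← hlk]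
    field_simp
    ring
  rw [hid]
  have hb1 := log_one_add_bound (le_of_lt hE)
  have hb2 := log_one_add_bound (show (0:ℝ) ≤ (K:ℝ) * E by positivity)
  rw [← hlu] at hb1
  rw [← hlv] at hb2
  have hE2 : (0:ℝ) < E ^ 2 := by positivity
  have hfrac : 0 ≤ (K:ℝ)^2 * lk * E^2 / (1 + (K:ℝ) * E) := by positivity
  have hfrac' : (K:ℝ)^2 * lk * E^2 / (1 + (K:ℝ) * E) ≤ (K:ℝ)^2 * lk * E^2 := by
    apply div_le_self (by positivity) (by nlinarith)
  rw [Real.norm_eq_abs, Real.norm_eq_abs, abs_of_pos hE2]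
  rw [abs_le]
  have hm1 : (K:ℝ) * (E - lu) ≤ (K:ℝ) * E^2 :=
    mul_le_mul_of_nonneg_left hb1.2 hK0.le
  have hm1' : 0 ≤ (K:ℝ) * (E - lu) :=
    mul_nonneg hK0.le hb1.1
  have hm2 : (K:ℝ) * E - lv ≤ (K:ℝ)^2 * E^2 := by
    have := hb2.2
    nlinarith [this]
  have hk2 : (0:ℝ) ≤ (K:ℝ)^2 * E^2 := by positivity
  have hk1 : (0:ℝ) ≤ (K:ℝ) * E^2 := by positivity
  have hk3 : (0:ℝ) ≤ (K:ℝ)^2 * lk * E^2 := by positivity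
  constructor
  · linarith [hb2.1]
  · linarith [hb2.1]
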